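/- Let A be an abelian group and Γ a group. The group homomorphism A ≀ Γ → A × Ab(Γ) given by (f, γ) ↦ (ε(f), [γ]), where ε(f) = Σ_{x ∈ Γ} f(x) is the augmentation and [γ] is the image of γ in the abelianization Ab(Γ) of Γ, is surjective and its kernel equals the commutator subgroup of A ≀ Γ. In other words, the abelianization of A ≀ Γ is A × Ab(Γ) via this map. -/

import Mathlib

/-- A group is Hopfian if every surjective endomorphism is injective. -/
def IsHopfian (G : Type*) [Group G] : Prop :=
  ∀ φ : G →* G, Function.Surjective φ → Function.Injective φ

/-- A unital ring is directly finite if `x * y = 1` implies `y * x = 1`. -/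
def DirectlyFinite (R : Type*) [Ring R] : Prop :=
  ∀ x y : R, x * y = 1 → y * x = 1

/-- The action of `Γ` on the base group `Γ →₀ A` of the wreath product,
given by `(g • f) x = f (g⁻¹ * x)`. -/
noncomputable def wreathAction (A : Type*) [AddCommGroup A] (Γ : Type*) [Group Γ] :
    Γ →* MulAut (Multiplicative (Γ →₀ A)) where
  toFun g := AddEquiv.toMultiplicative (Finsupp.domCongr (Equiv.mulLeft g))
  map_one' := by
    apply MulEquiv.ext
    intro f
    apply Multiplicative.toAdd.injective
    apply Finsupp.ext
    intro x
    simp [Finsupp.domCongr_apply]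
    rfl
  map_mul' g₁ g₂ := by
    apply MulEquiv.ext
    intro f
    apply Multiplicative.toAdd.injective
    apply Finsupp.ext
    intro x
    simp [Finsupp.domCongr_apply, mul_assoc]
    rfl

/-- The (restricted) wreath product `A ≀ Γ`: the semidirect product of the group
`Γ →₀ A` of finitely supported functions `Γ → A` (pointwise addition) by `Γ`,
acting by `(g • f) x = f (g⁻¹ * x)`. -/
abbrev WreathProduct (A : Type*) [AddCommGroup A] (Γ : Type*) [Group Γ] : Type _ :=
  SemidirectProduct (Multiplicative (Γ →₀ A)) Γ (wreathAction A Γ)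

/-- The base group `Γ →₀ A` of the wreath product, as a subgroup of `A ≀ Γ`. -/
noncomputable def WreathProduct.base (A : Type*) [AddCommGroup A] (Γ : Type*) [Group Γ] :
    Subgroup (WreathProduct A Γ) :=
  (SemidirectProduct.inl : Multiplicative (Γ →₀ A) →* WreathProduct A Γ).range

section
variable {A : Type*} [AddCommGroup A] {Γ : Type*} [Group Γ]

open SemidirectProduct Finsupp
open scoped commutatorElement

lemma wreathAction_apply (g : Γ) (f : Γ →₀ A) :
    Multiplicative.toAdd ((wreathAction A Γ g) (Multiplicative.ofAdd f)) =
      Finsupp.equivMapDomain (Equiv.mulLeft g) f := rfl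

lemma aug_invariant (g : Γ) (f : Γ →₀ A) :
    ((Finsupp.equivMapDomain (Equiv.mulLeft g) f).sum fun _ a => a) = f.sum fun _ a => a := by
  rw [Finsupp.equivMapDomain_eq_mapDomain]
  exact Finsupp.sum_mapDomain_index (fun _ => rfl) (fun _ _ _ => rfl)

lemma single_sub_single_mem (x : Γ) (a : A) :
    (SemidirectProduct.inl (Multiplicative.ofAdd
        (Finsupp.single x a - Finsupp.single 1 a)) : WreathProduct A Γ) ∈
      commutator (WreathProduct A Γ) := by
  have key : (SemidirectProduct.inl (Multiplicative.ofAdd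
      (Finsupp.single x a - Finsupp.single 1 a)) : WreathProduct A Γ) =
      ⁅(SemidirectProduct.inr x : WreathProduct A Γ),
        SemidirectProduct.inl (Multiplicative.ofAdd (Finsupp.single 1 a))⁆ := by
    rw [commutatorElement_def]
    have h1 : (wreathAction A Γ x) (Multiplicative.ofAdd (Finsupp.single 1 a)) =
        Multiplicative.ofAdd (Finsupp.single x a) := by
      apply Multiplicative.toAdd.injective
      rw [wreathAction_apply]
      ext y
      simp [Finsupp.equivMapDomain_apply, Finsupp.single_apply, eq_comm (a := y),
        Equiv.eq_symm_apply]
    rw [← map_inv SemidirectProduct.inr, ← SemidirectProduct.inl_aut, h1, ← map_inv, ← map_mul]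
    congr 1
    apply Multiplicative.toAdd.injective
    simp [sub_eq_add_neg]
  rw [key]
  exact Subgroup.commutator_mem_commutator (Subgroup.mem_top _) (Subgroup.mem_top _)

lemma inl_sub_single_sum_mem (f : Γ →₀ A) :
    (SemidirectProduct.inl (Multiplicative.ofAdd
        (f - Finsupp.single 1 (f.sum fun _ a => a))) : WreathProduct A Γ) ∈
      commutator (WreathProduct A Γ) := by
  classical
  induction f using Finsupp.induction with
  | zero => simpa using (commutator (WreathProduct A Γ)).one_mem
  | single_add x a g hx ha ih =>
      have hsum : ((Finsupp.single x a + g).sum fun _ b => b) = a + (g.sum fun _ b => b) := by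
        rw [Finsupp.sum_add_index (fun _ _ => rfl) (fun _ _ _ _ => rfl)]
        simp
      have heq : (Finsupp.single x a + g) - Finsupp.single 1 ((Finsupp.single x a + g).sum fun _ b => b)
          = (Finsupp.single x a - Finsupp.single 1 a) + (g - Finsupp.single 1 (g.sum fun _ b => b)) := by
        rw [hsum, Finsupp.single_add]
        abel
      rw [heq]
      have : (Multiplicative.ofAdd ((Finsupp.single x a - Finsupp.single 1 a) +
          (g - Finsupp.single 1 (g.sum fun _ b => b)))) =
          Multiplicative.ofAdd (Finsupp.single x a - Finsupp.single 1 a) *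
          Multiplicative.ofAdd (g - Finsupp.single 1 (g.sum fun _ b => b)) := rfl
      rw [this, map_mul]
      exact (commutator _).mul_mem (single_sub_single_mem x a) ih

end

/-- The abelianization of `A ≀ Γ` is `A × Ab(Γ)`, via the surjective homomorphism
`(f, γ) ↦ (ε f, [γ])`, where `ε` is the augmentation (the sum of values) and `[γ]` is
the class of `γ` in the abelianization of `Γ`; its kernel is the commutator subgroup
of `A ≀ Γ`. -/
theorem wreath_abelianization (A : Type*) [AddCommGroup A] (Γ : Type*) [Group Γ] :
    ∃ Φ : WreathProduct A Γ →* (Multiplicative A × Abelianization Γ),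
      (∀ w : WreathProduct A Γ,
        Φ w = (Multiplicative.ofAdd ((Multiplicative.toAdd w.left).sum fun _ a => a),
               Abelianization.of w.right)) ∧
      Function.Surjective Φ ∧
      Φ.ker = commutator (WreathProduct A Γ) := by
  classical
  let ε : (Γ →₀ A) →+ A := Finsupp.liftAddHom fun _ => AddMonoidHom.id A
  have hε : ∀ f : Γ →₀ A, ε f = f.sum fun _ a => a := fun f => rfl
  let φ₁ : Multiplicative (Γ →₀ A) →* Multiplicative A × Abelianization Γ :=
    (MonoidHom.inl _ _).comp ε.toMultiplicative
  let φ₂ : Γ →* Multiplicative A × Abelianization Γ :=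
    (MonoidHom.inr _ _).comp Abelianization.of
  have hφ₁ : ∀ f : Multiplicative (Γ →₀ A),
      φ₁ f = (Multiplicative.ofAdd ((Multiplicative.toAdd f).sum fun _ a => a), 1) := by
    intro f
    simp [φ₁, hε]
  have hcompat : ∀ g : Γ, φ₁.comp ((wreathAction A Γ) g).toMonoidHom =
      (MulAut.conj (φ₂ g)).toMonoidHom.comp φ₁ := by
    intro g
    apply MonoidHom.ext
    intro f
    have h1 : φ₁ (((wreathAction A Γ) g) f) = φ₁ f := by
      rw [hφ₁, hφ₁]
      have : Multiplicative.toAdd (((wreathAction A Γ) g) f) =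
          Finsupp.equivMapDomain (Equiv.mulLeft g) (Multiplicative.toAdd f) := rfl
      rw [this, aug_invariant]
    simp only [MonoidHom.comp_apply, MulEquiv.coe_toMonoidHom, MulAut.conj_apply, h1]
    rw [mul_comm (φ₂ g) (φ₁ f), mul_inv_cancel_right]
  refine ⟨SemidirectProduct.lift φ₁ φ₂ hcompat, ?_, ?_, ?_⟩
  · intro w
    conv_lhs => rw [← SemidirectProduct.inl_left_mul_inr_right w]
    rw [map_mul, SemidirectProduct.lift_inl, SemidirectProduct.lift_inr, hφ₁]
    ext
    · simp [φ₂]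
    · simp [φ₂]
  · rintro ⟨a, q⟩
    obtain ⟨g, rfl⟩ := QuotientGroup.mk_surjective q
    refine ⟨SemidirectProduct.inl (Multiplicative.ofAdd
      (Finsupp.single 1 (Multiplicative.toAdd a))) * SemidirectProduct.inr g, ?_⟩
    rw [map_mul, SemidirectProduct.lift_inl, SemidirectProduct.lift_inr, hφ₁]
    ext
    · simp [φ₂, Finsupp.sum_single_index]
    · simp [φ₂]
      rfl
  · apply le_antisymm
    · intro w hw
      rw [MonoidHom.mem_ker] at hw
      have hform : (SemidirectProduct.lift φ₁ φ₂ hcompat) w =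
          (Multiplicative.ofAdd ((Multiplicative.toAdd w.left).sum fun _ a => a),
            Abelianization.of w.right) := by
        conv_lhs => rw [← SemidirectProduct.inl_left_mul_inr_right w]
        rw [map_mul, SemidirectProduct.lift_inl, SemidirectProduct.lift_inr, hφ₁]
        ext
        · simp [φ₂]
        · simp [φ₂]
      rw [hform, Prod.ext_iff] at hw
      obtain ⟨h1, h2⟩ := hw
      have hsum : ((Multiplicative.toAdd w.left).sum fun _ a => a) = 0 :=
        Multiplicative.ofAdd.injective h1
      have hright : w.right ∈ commutator Γ := (QuotientGroup.eq_one_iff _).mp h2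
      rw [← SemidirectProduct.inl_left_mul_inr_right w]
      apply (commutator _).mul_mem
      · have := inl_sub_single_sum_mem (A := A) (Multiplicative.toAdd w.left)
        rw [hsum] at this
        simpa using this
      · have hmem : (SemidirectProduct.inr w.right : WreathProduct A Γ) ∈
            Subgroup.map SemidirectProduct.inr (commutator Γ) :=
          ⟨w.right, hright, rfl⟩
        have key : Subgroup.map (SemidirectProduct.inr :
            Γ →* WreathProduct A Γ) (commutator Γ) ≤ commutator (WreathProduct A Γ) := by
          rw [commutator_def, commutator_def, Subgroup.map_commutator]
          exact Subgroup.commutator_mono le_top le_top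
        exact key hmem
    · exact Abelianization.commutator_subset_ker _
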